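/- Let a, k₁, k₃ > 0 and define Y : ℝ≥0 → ℝ as the solution to Y'(t) + (2a/(k₁t+1) + 1/√(2k₃t+1))·Y(t) = a/(k₁t+1) with Y(0) = 1. Then lim_{t→∞} Y(t) = 0. -/

import Mathlib

open Filter Set Real

theorem stmt_4 (Y : ℝ → ℝ) (a k₁ k₃ : ℝ) (ha : 0 < a) (hk₁ : 0 < k₁) (hk₃ : 0 < k₃)
    (hY : ∀ t : ℝ, 0 ≤ t →
      HasDerivAt Y (a / (k₁ * t + 1)
        - (2 * a / (k₁ * t + 1) + 1 / Real.sqrt (2 * k₃ * t + 1)) * Y t) t)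
    (hY0 : Y 0 = 1) :
    Filter.Tendsto Y Filter.atTop (nhds 0) := by
  have hp : ∀ t : ℝ, 0 ≤ t → (0:ℝ) < k₁ * t + 1 := by intro t ht; nlinarith
  have hq0 : ∀ t : ℝ, 0 ≤ t → (0:ℝ) < 2 * k₃ * t + 1 := by intro t ht; nlinarith
  have hq : ∀ t : ℝ, 0 ≤ t → (0:ℝ) < Real.sqrt (2 * k₃ * t + 1) :=
    fun t ht => Real.sqrt_pos.mpr (hq0 t ht)
  have hcont : ContinuousOn Y (Ici 0) :=
    fun t ht => ((hY t ht).continuousAt).continuousWithinAt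
  -- Nonnegativity of Y on [0, ∞)
  have hnn : ∀ t : ℝ, 0 ≤ t → 0 ≤ Y t := by
    intro t₀ ht₀
    by_contra hneg
    push_neg at hneg
    have ht₀0 : 0 < t₀ := by
      rcases eq_or_lt_of_le ht₀ with h | h
      · exfalso; rw [← h, hY0] at hneg; linarith
      · exact h
    set S : Set ℝ := Icc 0 t₀ ∩ Y ⁻¹' (Ici 0) with hSdef
    have hSc : IsClosed S :=
      (hcont.mono (Icc_subset_Ici_self)).preimage_isClosed_of_isClosed
        isClosed_Icc isClosed_Ici
    have hScomp : IsCompact S :=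
      isCompact_Icc.of_isClosed_subset hSc inter_subset_left
    have hSne : S.Nonempty := ⟨0, ⟨le_refl 0, le_of_lt ht₀0⟩, by simp [hY0]⟩
    set s := sSup S with hs
    have hsmem : s ∈ S := hScomp.sSup_mem hSne
    obtain ⟨⟨hs0, hst₀⟩, hsY⟩ := hsmem
    have hsY' : 0 ≤ Y s := hsY
    have hslt : s < t₀ := by
      rcases eq_or_lt_of_le hst₀ with h | h
      · exfalso; rw [h] at hsY'; linarith
      · exact h
    have hupper : ∀ u, u ∈ Ioc s t₀ → Y u < 0 := by
      intro u ⟨hsu, hut₀⟩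
      by_contra hYu
      push_neg at hYu
      have huS : u ∈ S := ⟨⟨le_trans hs0 (le_of_lt hsu), hut₀⟩, hYu⟩
      have : u ≤ s := le_csSup hScomp.bddAbove huS
      linarith
    have hmono : StrictMonoOn Y (Icc s t₀) := by
      apply strictMonoOn_of_deriv_pos (convex_Icc s t₀)
      · exact hcont.mono (fun u hu => le_trans hs0 hu.1)
      · intro u hu
        rw [interior_Icc] at hu
        have hu0 : (0:ℝ) ≤ u := le_trans hs0 (le_of_lt hu.1)
        rw [(hY u hu0).deriv]
        have hYu : Y u < 0 := hupper u ⟨hu.1, le_of_lt hu.2⟩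
        have h1 : 0 < a / (k₁ * u + 1) := div_pos ha (hp u hu0)
        have h2 : 0 < 2 * a / (k₁ * u + 1) + 1 / Real.sqrt (2 * k₃ * u + 1) :=
          add_pos (div_pos (by linarith) (hp u hu0)) (div_pos one_pos (hq u hu0))
        have h3 : (2 * a / (k₁ * u + 1) + 1 / Real.sqrt (2 * k₃ * u + 1)) * Y u < 0 :=
          mul_neg_of_pos_of_neg h2 hYu
        linarith
    have : Y s < Y t₀ := hmono ⟨le_refl s, le_of_lt hslt⟩ ⟨hst₀, le_refl t₀⟩ hslt
    linarith
  -- Main eventual bound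
  have main : ∀ ε : ℝ, 0 < ε → ∃ T : ℝ, ∀ t, T ≤ t → Y t ≤ ε := by
    intro ε hε
    set T₀ : ℝ := max 1 ((32 * a ^ 2 * k₃ + 16 * a ^ 2) / (ε ^ 2 * k₁ ^ 2)) with hT₀def
    have hT₀1 : (1:ℝ) ≤ T₀ := le_max_left _ _
    have hT₀0 : (0:ℝ) ≤ T₀ := by linarith
    have hbound : ∀ t, T₀ ≤ t → 4 * a * Real.sqrt (2 * k₃ * t + 1) ≤ ε * (k₁ * t + 1) := by
      intro t htT
      have ht1 : (1:ℝ) ≤ t := le_trans hT₀1 htT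
      have ht0 : (0:ℝ) ≤ t := by linarith
      have h2 : (32 * a ^ 2 * k₃ + 16 * a ^ 2) / (ε ^ 2 * k₁ ^ 2) ≤ t :=
        le_trans (le_max_right _ _) htT
      have h3 : 32 * a ^ 2 * k₃ + 16 * a ^ 2 ≤ ε ^ 2 * k₁ ^ 2 * t := by
        rw [div_le_iff₀ (by positivity)] at h2; linarith
      have hkey : 16 * a ^ 2 * (2 * k₃ * t + 1) ≤ ε ^ 2 * (k₁ * t + 1) ^ 2 := by
        nlinarith [mul_le_mul_of_nonneg_right h3 ht0, sq_nonneg a,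
          mul_nonneg (mul_nonneg (sq_nonneg ε) (le_of_lt hk₁)) ht0]
      have h4 : Real.sqrt (2 * k₃ * t + 1) ≤ ε * (k₁ * t + 1) / (4 * a) := by
        rw [show ε * (k₁ * t + 1) / (4 * a)
            = Real.sqrt ((ε * (k₁ * t + 1) / (4 * a)) ^ 2) from
          (Real.sqrt_sq (by positivity)).symm]
        apply Real.sqrt_le_sqrt
        rw [div_pow, le_div_iff₀ (by positivity)]
        nlinarith
      calc 4 * a * Real.sqrt (2 * k₃ * t + 1)
          ≤ 4 * a * (ε * (k₁ * t + 1) / (4 * a)) :=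
            mul_le_mul_of_nonneg_left h4 (by positivity)
        _ = ε * (k₁ * t + 1) := by field_simp
    -- derivative bound whenever Y u ≥ ε/2
    have hderiv_le : ∀ u, T₀ ≤ u → ε / 2 ≤ Y u →
        a / (k₁ * u + 1) - (2 * a / (k₁ * u + 1) + 1 / Real.sqrt (2 * k₃ * u + 1)) * Y u
          ≤ -(ε / 4) / Real.sqrt (2 * k₃ * u + 1) := by
      intro u huT hYu
      have hu0 : (0:ℝ) ≤ u := le_trans hT₀0 huT
      have hpu := hp u hu0
      have hqu := hq u hu0
      have hb := hbound u huT
      have h1 : a / (k₁ * u + 1) ≤ ε / 4 / Real.sqrt (2 * k₃ * u + 1) := by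
        rw [div_le_div_iff₀ hpu hqu]; nlinarith
      have h2 : 0 ≤ (2 * a / (k₁ * u + 1)) * Y u :=
        mul_nonneg (by positivity) (by linarith)
      have h3 : (1 / Real.sqrt (2 * k₃ * u + 1)) * (ε / 2)
          ≤ (1 / Real.sqrt (2 * k₃ * u + 1)) * Y u :=
        mul_le_mul_of_nonneg_left hYu (by positivity)
      have hexp : (2 * a / (k₁ * u + 1) + 1 / Real.sqrt (2 * k₃ * u + 1)) * Y u
          = (2 * a / (k₁ * u + 1)) * Y u + (1 / Real.sqrt (2 * k₃ * u + 1)) * Y u := by ring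
      have heq : ε / 4 / Real.sqrt (2 * k₃ * u + 1)
          - (1 / Real.sqrt (2 * k₃ * u + 1)) * (ε / 2)
          = -(ε / 4) / Real.sqrt (2 * k₃ * u + 1) := by
        field_simp; ring
      linarith
    -- derivative of the comparison function
    have hqderiv : ∀ u : ℝ, 0 ≤ u →
        HasDerivAt (fun v => (ε / (4 * k₃)) * Real.sqrt (2 * k₃ * v + 1))
          (ε / 4 / Real.sqrt (2 * k₃ * u + 1)) u := by
      intro u hu0
      have h1 : HasDerivAt (fun v : ℝ => 2 * k₃ * v + 1) (2 * k₃) u := by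
        simpa using ((hasDerivAt_id u).const_mul (2 * k₃)).add_const 1
      have h2 := (h1.sqrt (ne_of_gt (hq0 u hu0))).const_mul (ε / (4 * k₃))
      refine h2.congr_deriv ?_
      have := (hq u hu0).ne'
      have hk3 := hk₃.ne'
      field_simp
    -- Step A: Y eventually gets below ε/2
    have hstepA : ∃ t₁, T₀ ≤ t₁ ∧ Y t₁ ≤ ε / 2 := by
      by_contra hA
      push_neg at hA
      set G : ℝ → ℝ := fun v => Y v + (ε / (4 * k₃)) * Real.sqrt (2 * k₃ * v + 1) with hGdef
      have hGd : ∀ u, T₀ ≤ u → HasDerivAt G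
          ((a / (k₁ * u + 1)
            - (2 * a / (k₁ * u + 1) + 1 / Real.sqrt (2 * k₃ * u + 1)) * Y u)
            + ε / 4 / Real.sqrt (2 * k₃ * u + 1)) u := by
        intro u huT
        exact (hY u (le_trans hT₀0 huT)).add (hqderiv u (le_trans hT₀0 huT))
      have hGanti : AntitoneOn G (Ici T₀) := by
        apply antitoneOn_of_deriv_nonpos (convex_Ici T₀)
        · intro u hu
          exact (hGd u hu).continuousAt.continuousWithinAt
        · intro u hu
          rw [interior_Ici] at hu
          exact ((hGd u (le_of_lt hu)).differentiableAt).differentiableWithinAt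
        · intro u hu
          rw [interior_Ici] at hu
          rw [(hGd u (le_of_lt hu)).deriv]
          have h1 := hderiv_le u (le_of_lt hu) (le_of_lt (hA u (le_of_lt hu)))
          have h2 : -(ε / 4) / Real.sqrt (2 * k₃ * u + 1)
              = -(ε / 4 / Real.sqrt (2 * k₃ * u + 1)) := neg_div _ _
          linarith
      set C : ℝ := G T₀ with hCdef
      set M : ℝ := max (4 * k₃ * C / ε) 0 with hMdef
      have hM0 : 0 ≤ M := le_max_right _ _
      set τ : ℝ := max T₀ (M ^ 2 / (2 * k₃)) with hτdef
      have hτT : T₀ ≤ τ := le_max_left _ _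
      have hτ0 : (0:ℝ) ≤ τ := le_trans hT₀0 hτT
      have hMτ : M < Real.sqrt (2 * k₃ * τ + 1) := by
        rw [show M = Real.sqrt (M ^ 2) from (Real.sqrt_sq hM0).symm]
        apply Real.sqrt_lt_sqrt (sq_nonneg M)
        have : M ^ 2 / (2 * k₃) ≤ τ := le_max_right _ _
        rw [div_le_iff₀ (by positivity)] at this
        nlinarith
      have hCM : C ≤ (ε / (4 * k₃)) * M := by
        have h1 : 4 * k₃ * C / ε ≤ M := le_max_left _ _
        have h2 : (ε / (4 * k₃)) * (4 * k₃ * C / ε) = C := by field_simp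
        nlinarith [mul_le_mul_of_nonneg_left h1 (le_of_lt (by positivity : (0:ℝ) < ε / (4 * k₃)))]
      have hGτ : G τ ≤ C := hGanti (self_mem_Ici) hτT hτT
      have hYτ : 0 ≤ Y τ := hnn τ hτ0
      have hsqrtpos : (0:ℝ) < ε / (4 * k₃) := by positivity
      have : C < (ε / (4 * k₃)) * Real.sqrt (2 * k₃ * τ + 1) :=
        lt_of_le_of_lt hCM (by exact mul_lt_mul_of_pos_left hMτ hsqrtpos)
      have hGτ' : Y τ + (ε / (4 * k₃)) * Real.sqrt (2 * k₃ * τ + 1) ≤ C := hGτ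
      linarith [hGτ', hYτ, this]
    obtain ⟨t₁, ht₁T, ht₁Y⟩ := hstepA
    refine ⟨t₁, ?_⟩
    intro t₂ ht₂
    by_contra hB
    push_neg at hB
    have ht₁0 : (0:ℝ) ≤ t₁ := le_trans hT₀0 ht₁T
    set S₂ : Set ℝ := Icc t₁ t₂ ∩ Y ⁻¹' (Iic (ε / 2)) with hS₂def
    have hS₂c : IsClosed S₂ :=
      (hcont.mono (fun u hu => le_trans ht₁0 hu.1)).preimage_isClosed_of_isClosed
        isClosed_Icc isClosed_Iic
    have hS₂comp : IsCompact S₂ :=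
      isCompact_Icc.of_isClosed_subset hS₂c inter_subset_left
    have hS₂ne : S₂.Nonempty := ⟨t₁, ⟨le_refl t₁, ht₂⟩, ht₁Y⟩
    set s := sSup S₂ with hsdef
    have hsmem : s ∈ S₂ := hS₂comp.sSup_mem hS₂ne
    obtain ⟨⟨hs1, hs2⟩, hsY⟩ := hsmem
    have hsY' : Y s ≤ ε / 2 := hsY
    have hslt : s < t₂ := by
      rcases eq_or_lt_of_le hs2 with h | h
      · exfalso; rw [h] at hsY'; linarith
      · exact h
    have hlower : ∀ u, u ∈ Ioc s t₂ → ε / 2 < Y u := by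
      intro u ⟨hsu, hut₂⟩
      by_contra hYu
      push_neg at hYu
      have huS : u ∈ S₂ := ⟨⟨le_trans hs1 (le_of_lt hsu), hut₂⟩, hYu⟩
      have : u ≤ s := le_csSup hS₂comp.bddAbove huS
      linarith
    have hanti : StrictAntiOn Y (Icc s t₂) := by
      apply strictAntiOn_of_deriv_neg (convex_Icc s t₂)
      · exact hcont.mono (fun u hu => le_trans (le_trans ht₁0 hs1) hu.1)
      · intro u hu
        rw [interior_Icc] at hu
        have huT : T₀ ≤ u := le_trans (le_trans ht₁T hs1) (le_of_lt hu.1)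
        have hu0 : (0:ℝ) ≤ u := le_trans hT₀0 huT
        rw [(hY u hu0).deriv]
        have hYu : ε / 2 ≤ Y u := le_of_lt (hlower u ⟨hu.1, le_of_lt hu.2⟩)
        have := hderiv_le u huT hYu
        have hneg : -(ε / 4) / Real.sqrt (2 * k₃ * u + 1) < 0 :=
          div_neg_of_neg_of_pos (by linarith) (hq u hu0)
        linarith
    have : Y t₂ < Y s := hanti ⟨le_refl s, le_of_lt hslt⟩ ⟨hs2, le_refl t₂⟩ hslt
    linarith
  -- Conclude
  rw [Metric.tendsto_atTop]
  intro ε hε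
  obtain ⟨T, hT⟩ := main (ε / 2) (by linarith)
  refine ⟨max T 0, fun t ht => ?_⟩
  have ht0 : (0:ℝ) ≤ t := le_trans (le_max_right T 0) ht
  have h1 : Y t ≤ ε / 2 := hT t (le_trans (le_max_left T 0) ht)
  have h2 : 0 ≤ Y t := hnn t ht0
  rw [Real.dist_eq, sub_zero, abs_of_nonneg h2]
  linarith
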